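/- Let h ∈ H^∞(S°) be a bounded analytic function on the open unit strip. Then there exists φ : S → ℂ with: (i) |φ(z₁) − φ(z₂)| ≤ |z₁ − z₂| · sup_{ζ ∈ S°} |h(ζ)| for all z₁, z₂ ∈ S; (ii) φ is analytic in S° with φ′ = h there; (iii) |φ(j + it₁) − φ(j + it₂)| ≤ |t₁ − t₂| · lim_{r→0⁺} sup{|h(z)| : z ∈ S°, 0 < |Re z − j| < r} for j = 0,1 and all t₁, t₂ ∈ ℝ; (iv) |φ(z)| ≤ |z − 1/2| · sup_{ζ ∈ S°} |h(ζ)| for all z ∈ S. -/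

import Mathlib

open Complex Set MeasureTheory intervalIntegral

set_option maxHeartbeats 1000000 in
theorem antiderivative_on_strip
    (h : ℂ → ℂ)
    (hanal : DifferentiableOn ℂ h {z : ℂ | 0 < z.re ∧ z.re < 1})
    (hbdd : ∃ B : ℝ, ∀ z : ℂ, 0 < z.re → z.re < 1 → ‖h z‖ ≤ B) :
    ∃ φ : ℂ → ℂ,
      (∀ z1 z2 : ℂ, 0 ≤ z1.re → z1.re ≤ 1 → 0 ≤ z2.re → z2.re ≤ 1 →
        ‖φ z1 - φ z2‖ ≤ ‖z1 - z2‖ *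
          sSup ((fun ζ => ‖h ζ‖) '' {z : ℂ | 0 < z.re ∧ z.re < 1})) ∧
      (∀ z : ℂ, 0 < z.re → z.re < 1 → HasDerivAt φ (h z) z) ∧
      (∀ t1 t2 : ℝ, ‖φ (t1 * I) - φ (t2 * I)‖ ≤ |t1 - t2| *
        sInf {M | ∃ r > (0:ℝ), ∀ z : ℂ, 0 < z.re → z.re < 1 →
          |z.re - 0| < r → ‖h z‖ ≤ M}) ∧
      (∀ t1 t2 : ℝ, ‖φ (1 + t1 * I) - φ (1 + t2 * I)‖ ≤ |t1 - t2| *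
        sInf {M | ∃ r > (0:ℝ), ∀ z : ℂ, 0 < z.re → z.re < 1 →
          |z.re - 1| < r → ‖h z‖ ≤ M}) ∧
      (∀ z : ℂ, 0 ≤ z.re → z.re ≤ 1 → ‖φ z‖ ≤ ‖z - 1/2‖ *
        sSup ((fun ζ => ‖h ζ‖) '' {z : ℂ | 0 < z.re ∧ z.re < 1})) := by
  obtain ⟨B, hB⟩ := hbdd
  set S : Set ℂ := {z : ℂ | 0 < z.re ∧ z.re < 1} with hSdef
  have hS : IsOpen S :=
    (isOpen_lt continuous_const Complex.continuous_re).inter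
      (isOpen_lt Complex.continuous_re continuous_const)
  have hconv : Convex ℝ S := by
    have : S = Complex.reLm ⁻¹' (Ioo 0 1) := rfl
    rw [this]; exact (convex_Ioo (0:ℝ) 1).linear_preimage _
  have hre : ∀ (z : ℂ) (t : ℝ), ((1/2 : ℂ) + (t:ℂ) * (z - 1/2)).re = 1/2 + t * (z.re - 1/2) := by
    intro z t; simp [Complex.mul_re]
  have hmem : ∀ z : ℂ, 0 ≤ z.re → z.re ≤ 1 → ∀ t : ℝ, 0 ≤ t → t < 1 →
      (1/2 : ℂ) + (t:ℂ) * (z - 1/2) ∈ S := by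
    intro z h0 h1 t ht0 ht1
    constructor <;> rw [hre] <;> nlinarith
  have hmem' : ∀ z ∈ S, ∀ t : ℝ, 0 ≤ t → t ≤ 1 → (1/2:ℂ) + (t:ℂ)*(z-1/2) ∈ S := by
    intro z hz t ht0 ht1; obtain ⟨h0, h1⟩ := hz
    constructor <;> rw [hre] <;> nlinarith
  have hhalf : (1/2 : ℂ) ∈ S := by constructor <;> norm_num
  have hB0 : 0 ≤ B := le_trans (norm_nonneg _) (hB _ hhalf.1 hhalf.2)
  set K := sSup ((fun ζ => ‖h ζ‖) '' S) with hKdef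
  have hbddK : BddAbove ((fun ζ => ‖h ζ‖) '' S) :=
    ⟨B, by rintro y ⟨ζ, hζ, rfl⟩; exact hB ζ hζ.1 hζ.2⟩
  have hK : ∀ z ∈ S, ‖h z‖ ≤ K := fun z hz => le_csSup hbddK ⟨z, hz, rfl⟩
  have hK0 : 0 ≤ K := le_trans (norm_nonneg _) (hK _ hhalf)
  have hcont : ContinuousOn h S := hanal.continuousOn
  set g : ℂ → ℝ → ℂ := fun z t => h (1/2 + (t:ℂ) * (z - 1/2)) with hgdef
  have hpathcont : ∀ z : ℂ, Continuous fun t : ℝ => (1/2:ℂ) + (t:ℂ)*(z - 1/2) :=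
    fun z => continuous_const.add (Complex.continuous_ofReal.mul continuous_const)
  have hgint : ∀ z : ℂ, 0 ≤ z.re → z.re ≤ 1 → IntervalIntegrable (g z) volume 0 1 := by
    intro z h0 h1
    rw [intervalIntegrable_iff, uIoc_of_le zero_le_one,
      integrableOn_Ioc_iff_integrableOn_Ioo]
    have hcg : ContinuousOn (g z) (Ioo 0 1) :=
      hcont.comp (hpathcont z).continuousOn (fun t ht => hmem z h0 h1 t ht.1.le ht.2)
    refine ⟨hcg.aestronglyMeasurable measurableSet_Ioo, ?_⟩
    apply HasFiniteIntegral.restrict_of_bounded (C := K) measure_Ioo_lt_top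
    exact (ae_restrict_mem measurableSet_Ioo).mono fun t ht => hK _ (hmem z h0 h1 t ht.1.le ht.2)
  set φ : ℂ → ℂ := fun z => ∫ t in (0:ℝ)..1, (z - 1/2) * g z t with hφdef
  have φ_eq : ∀ z : ℂ, φ z = (z - 1/2) * ∫ t in (0:ℝ)..1, g z t := fun z =>
    intervalIntegral.integral_const_mul _ _
  have φ_half : φ (1/2 : ℂ) = 0 := by
    rw [φ_eq]; simp
  have hdcont : ContinuousOn (deriv h) S := ((hanal.analyticOnNhd hS).deriv).continuousOn
  -- interior derivative
  have hderiv : ∀ z ∈ S, HasDerivAt φ (h z) z := by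
    intro z₀ hz₀S
    obtain ⟨hz₀0, hz₀1⟩ := hz₀S
    set δ : ℝ := min z₀.re (1 - z₀.re) / 2 with hδdef
    have hδ0 : 0 < δ := div_pos (lt_min hz₀0 (by linarith)) two_pos
    have hδa : δ ≤ z₀.re / 2 := by
      have := min_le_left z₀.re (1 - z₀.re); rw [hδdef]; linarith
    have hδb : δ ≤ (1 - z₀.re) / 2 := by
      have := min_le_right z₀.re (1 - z₀.re); rw [hδdef]; linarith
    have hball : ∀ x ∈ Metric.ball z₀ δ, z₀.re - δ < x.re ∧ x.re < z₀.re + δ := by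
      intro x hx
      have h1 : |(x - z₀).re| ≤ ‖x - z₀‖ := Complex.abs_re_le_norm _
      have h2 : ‖x - z₀‖ < δ := by rwa [Metric.mem_ball, Complex.dist_eq] at hx
      rw [Complex.sub_re] at h1
      have h3 := abs_lt.mp (lt_of_le_of_lt h1 h2)
      exact ⟨by linarith [h3.1], by linarith [h3.2]⟩
    have hballS : Metric.ball z₀ δ ⊆ S := by
      intro x hx
      obtain ⟨l, u⟩ := hball x hx
      exact ⟨by linarith, by linarith⟩
    set a₁ : ℝ := min (1/2) (z₀.re - δ) with ha₁def
    set b₁ : ℝ := max (1/2) (z₀.re + δ) with hb₁def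
    have ha₁0 : 0 < a₁ := lt_min (by norm_num) (by linarith)
    have hb₁1 : b₁ < 1 := max_lt (by norm_num) (by linarith)
    have ha₁h : a₁ ≤ 1/2 := min_le_left _ _
    have hb₁h : 1/2 ≤ b₁ := le_max_left _ _
    have ha₁x : a₁ ≤ z₀.re - δ := min_le_right _ _
    have hb₁x : z₀.re + δ ≤ b₁ := le_max_right _ _
    set ρ : ℝ := min a₁ (1 - b₁) / 2 with hρdef
    have hρ0 : 0 < ρ := div_pos (lt_min ha₁0 (by linarith)) two_pos
    have hρa : ρ ≤ a₁/2 := by have := min_le_left a₁ (1 - b₁); rw [hρdef]; linarith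
    have hρb : ρ ≤ (1-b₁)/2 := by have := min_le_right a₁ (1 - b₁); rw [hρdef]; linarith
    have hsub : ∀ w : ℂ, a₁ ≤ w.re → w.re ≤ b₁ → Metric.ball w ρ ⊆ S := by
      intro w hw1 hw2 v hv
      have h1 : |(v - w).re| ≤ ‖v - w‖ := Complex.abs_re_le_norm _
      have h2 : ‖v - w‖ < ρ := by rwa [Metric.mem_ball, Complex.dist_eq] at hv
      rw [Complex.sub_re] at h1
      have h3 := abs_lt.mp (lt_of_le_of_lt h1 h2)
      exact ⟨by linarith [h3.1], by linarith [h3.2]⟩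
    set D : ℝ := (2*B+1)/ρ with hDdef
    have hD0 : 0 ≤ D := div_nonneg (by linarith) hρ0.le
    have hD : ∀ w : ℂ, a₁ ≤ w.re → w.re ≤ b₁ → ‖deriv h w‖ ≤ D := by
      intro w hw1 hw2
      have hwS : w ∈ S := ⟨lt_of_lt_of_le ha₁0 hw1, lt_of_le_of_lt hw2 hb₁1⟩
      refine Complex.norm_deriv_le_div_of_mapsTo_ball (hanal.mono (hsub w hw1 hw2)) ?_ hρ0
      intro v hv
      have hvS : v ∈ S := hsub w hw1 hw2 hv
      rw [Metric.mem_closedBall, dist_eq_norm]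
      calc ‖h v - h w‖ ≤ ‖h v‖ + ‖h w‖ := norm_sub_le _ _
        _ ≤ B + B := add_le_add (hB v hvS.1 hvS.2) (hB w hwS.1 hwS.2)
        _ ≤ 2*B+1 := by linarith
    have hprein : ∀ x ∈ Metric.ball z₀ δ, ∀ t : ℝ, 0 ≤ t → t ≤ 1 →
        a₁ ≤ ((1/2:ℂ) + (t:ℂ)*(x - 1/2)).re ∧ ((1/2:ℂ) + (t:ℂ)*(x - 1/2)).re ≤ b₁ := by
      intro x hx t ht0 ht1
      obtain ⟨l, u⟩ := hball x hx
      rw [hre]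
      constructor <;> nlinarith
    have key := intervalIntegral.hasDerivAt_integral_of_dominated_loc_of_deriv_le
      (μ := volume) (a := 0) (b := 1) (s := Metric.ball z₀ δ) (x₀ := z₀)
      (F := fun x t => (x - 1/2) * g x t)
      (F' := fun x t => g x t + (t:ℂ) * (x - 1/2) * deriv h (1/2 + (t:ℂ)*(x - 1/2)))
      (bound := fun _ => B + (‖z₀ - 1/2‖ + δ) * D)
      (Metric.ball_mem_nhds z₀ hδ0)
      (by
        filter_upwards [hS.mem_nhds ⟨hz₀0, hz₀1⟩] with x hx
        apply ContinuousOn.aestronglyMeasurable ?_ measurableSet_uIoc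
        rw [uIoc_of_le zero_le_one]
        exact continuousOn_const.mul (hcont.comp (hpathcont x).continuousOn
          (fun t ht => hmem' x hx t ht.1.le ht.2)))
      (by
        apply ContinuousOn.intervalIntegrable
        rw [uIcc_of_le zero_le_one]
        exact continuousOn_const.mul (hcont.comp (hpathcont z₀).continuousOn
          (fun t ht => hmem' z₀ ⟨hz₀0, hz₀1⟩ t ht.1 ht.2)))
      (by
        apply ContinuousOn.aestronglyMeasurable ?_ measurableSet_uIoc
        rw [uIoc_of_le zero_le_one]
        have hmaps : ∀ t ∈ Ioc (0:ℝ) 1, (1/2:ℂ) + (t:ℂ)*(z₀ - 1/2) ∈ S :=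
          fun t ht => hmem' z₀ ⟨hz₀0, hz₀1⟩ t ht.1.le ht.2
        exact (hcont.comp (hpathcont z₀).continuousOn hmaps).add
          (((Complex.continuous_ofReal.continuousOn).mul continuousOn_const).mul
            (hdcont.comp (hpathcont z₀).continuousOn hmaps)))
      (by
        refine Filter.Eventually.of_forall fun t ht x hx => ?_
        rw [uIoc_of_le zero_le_one] at ht
        have hpre := hprein x hx t ht.1.le ht.2
        have hpS : (1/2:ℂ) + (t:ℂ)*(x - 1/2) ∈ S :=
          ⟨lt_of_lt_of_le ha₁0 hpre.1, lt_of_le_of_lt hpre.2 hb₁1⟩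
        have h1 : ‖g x t‖ ≤ B := hB _ hpS.1 hpS.2
        have h2 : ‖(t:ℂ) * (x - 1/2)‖ ≤ ‖z₀ - 1/2‖ + δ := by
          rw [norm_mul, Complex.norm_real, Real.norm_eq_abs, abs_of_pos ht.1]
          have hxz : ‖x - z₀‖ < δ := by rwa [Metric.mem_ball, dist_eq_norm] at hx
          have hxd : ‖x - 1/2‖ ≤ ‖z₀ - 1/2‖ + δ := by
            calc ‖x - 1/2‖ = ‖(x - z₀) + (z₀ - 1/2)‖ := by ring_nf
              _ ≤ ‖x - z₀‖ + ‖z₀ - 1/2‖ := norm_add_le _ _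
              _ ≤ ‖z₀ - 1/2‖ + δ := by linarith
          nlinarith [norm_nonneg (x - 1/2), ht.2]
        have h3 : ‖deriv h ((1/2:ℂ) + (t:ℂ)*(x - 1/2))‖ ≤ D := hD _ hpre.1 hpre.2
        calc ‖g x t + (t:ℂ)*(x - 1/2) * deriv h ((1/2:ℂ) + (t:ℂ)*(x - 1/2))‖
            ≤ ‖g x t‖ + ‖(t:ℂ)*(x - 1/2)‖ * ‖deriv h ((1/2:ℂ) + (t:ℂ)*(x - 1/2))‖ := by
              refine (norm_add_le _ _).trans ?_
              rw [norm_mul]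
          _ ≤ B + (‖z₀ - 1/2‖ + δ) * D := by
              have := mul_le_mul h2 h3 (norm_nonneg _) (by positivity)
              linarith)
      (_root_.intervalIntegrable_const)
      (by
        refine Filter.Eventually.of_forall fun t ht x hx => ?_
        rw [uIoc_of_le zero_le_one] at ht
        have hxS : x ∈ S := hballS hx
        have hpS : (1/2:ℂ) + (t:ℂ)*(x - 1/2) ∈ S := hmem' x hxS t ht.1.le ht.2
        have du : HasDerivAt (fun y : ℂ => (1/2:ℂ) + (t:ℂ)*(y - 1/2)) ((t:ℝ):ℂ) x := by
          simpa using (((hasDerivAt_id x).sub_const (1/2:ℂ)).const_mul ((t:ℝ):ℂ)).const_add (1/2:ℂ)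
        have dh : HasDerivAt h (deriv h ((1/2:ℂ) + (t:ℂ)*(x - 1/2)))
            ((1/2:ℂ) + (t:ℂ)*(x - 1/2)) :=
          (hanal.differentiableAt (hS.mem_nhds hpS)).hasDerivAt
        have dc := dh.comp x du
        have d1 : HasDerivAt (fun y : ℂ => y - 1/2) 1 x := (hasDerivAt_id x).sub_const _
        have dm := d1.mul dc
        convert dm using 1
        all_goals try rfl
        simp only [hgdef, Function.comp, Function.comp_apply]
        ring)
    have hGder : ∀ t ∈ uIcc (0:ℝ) 1, HasDerivAt (fun s : ℝ => ((s:ℝ):ℂ) * g z₀ s)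
        (g z₀ t + (t:ℂ) * (z₀ - 1/2) * deriv h (1/2 + (t:ℂ)*(z₀ - 1/2))) t := by
      intro t ht
      rw [uIcc_of_le zero_le_one] at ht
      have hpS : (1/2:ℂ) + (t:ℂ)*(z₀ - 1/2) ∈ S := hmem' z₀ ⟨hz₀0, hz₀1⟩ t ht.1 ht.2
      have dr : HasDerivAt (fun s : ℝ => ((s:ℝ):ℂ)) 1 t := by
        exact Complex.ofRealCLM.hasDerivAt
      have du : HasDerivAt (fun s : ℝ => (1/2:ℂ) + ((s:ℝ):ℂ)*(z₀ - 1/2)) (z₀ - 1/2) t := by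
        simpa using (dr.mul_const (z₀ - 1/2)).const_add (1/2:ℂ)
      have dh : HasDerivAt h (deriv h ((1/2:ℂ) + (t:ℂ)*(z₀ - 1/2)))
          ((1/2:ℂ) + (t:ℂ)*(z₀ - 1/2)) :=
        (hanal.differentiableAt (hS.mem_nhds hpS)).hasDerivAt
      have dc := dh.scomp t du
      have dm := dr.mul dc
      convert dm using 1
      all_goals try rfl
      simp only [hgdef, Function.comp, Function.comp_apply, smul_eq_mul]
      ring
    have hF'int : IntervalIntegrable (fun t : ℝ => g z₀ t + (t:ℂ) * (z₀ - 1/2) *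
        deriv h (1/2 + (t:ℂ)*(z₀ - 1/2))) volume 0 1 := by
      apply ContinuousOn.intervalIntegrable
      rw [uIcc_of_le zero_le_one]
      have hmaps : ∀ t ∈ Icc (0:ℝ) 1, (1/2:ℂ) + (t:ℂ)*(z₀ - 1/2) ∈ S :=
        fun t ht => hmem' z₀ ⟨hz₀0, hz₀1⟩ t ht.1 ht.2
      exact (hcont.comp (hpathcont z₀).continuousOn hmaps).add
        (((Complex.continuous_ofReal.continuousOn).mul continuousOn_const).mul
          (hdcont.comp (hpathcont z₀).continuousOn hmaps))
    have hval : (∫ t in (0:ℝ)..1, (g z₀ t + (t:ℂ) * (z₀ - 1/2) *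
        deriv h (1/2 + (t:ℂ)*(z₀ - 1/2)))) = h z₀ := by
      rw [intervalIntegral.integral_eq_sub_of_hasDerivAt hGder hF'int]
      have harg : (1/2:ℂ) + ((1:ℝ):ℂ)*(z₀ - 1/2) = z₀ := by push_cast; ring
      simp [hgdef, harg]
    have hkey := key.2
    rw [hval] at hkey
    exact hkey
  -- Lipschitz on convex subsets
  have lipOn : ∀ (s : Set ℂ), Convex ℝ s → s ⊆ S → ∀ M : ℝ, (∀ w ∈ s, ‖h w‖ ≤ M) →
      ∀ z1 ∈ s, ∀ z2 ∈ s, ‖φ z1 - φ z2‖ ≤ M * ‖z1 - z2‖ := by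
    intro s hsc hsub M hM z1 h1 z2 h2
    exact hsc.norm_image_sub_le_of_norm_hasFDerivWithin_le
      (f' := fun w => ContinuousLinearMap.smulRight (1 : ℂ →L[ℂ] ℂ) (h w))
      (fun w hw => ((hderiv w (hsub hw)).hasFDerivAt).hasFDerivWithinAt)
      (fun w hw => by
        simpa [ContinuousLinearMap.norm_smulRight_apply] using hM w hw) h2 h1
  -- radial estimate
  have rad : ∀ z : ℂ, 0 ≤ z.re → z.re ≤ 1 → ∀ r : ℝ, 0 < r → r < 1 →
      ‖φ z - φ (1/2 + (r:ℂ)*(z - 1/2))‖ ≤ (1 - r) * (‖z - 1/2‖ * K) := by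
    intro z h0 h1 r hr0 hr1
    have hint := hgint z h0 h1
    have hint1 : IntervalIntegrable (g z) volume 0 r :=
      hint.mono_set (uIcc_subset_uIcc (by simp) (by
        rw [mem_uIcc]; exact Or.inl ⟨hr0.le, hr1.le⟩))
    have hint2 : IntervalIntegrable (g z) volume r 1 :=
      hint.mono_set (uIcc_subset_uIcc (by
        rw [mem_uIcc]; exact Or.inl ⟨hr0.le, hr1.le⟩) (by simp))
    have hzr : φ (1/2 + (r:ℂ)*(z-1/2)) = (z - 1/2) * ∫ t in (0:ℝ)..r, g z t := by
      have key : ∀ t ∈ uIcc (0:ℝ) 1,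
          ((1/2 + (r:ℂ)*(z-1/2)) - 1/2) * g (1/2 + (r:ℂ)*(z-1/2)) t
            = ((r:ℂ)*(z - 1/2)) * g z (r*t) := by
        intro t _
        simp only [hgdef]
        rw [show (1/2:ℂ) + (t:ℂ)*((1/2 + (r:ℂ)*(z-1/2)) - 1/2)
            = 1/2 + ((r*t:ℝ):ℂ)*(z-1/2) from by push_cast; ring]
        ring
      have hcm := intervalIntegral.integral_comp_mul_left (a := 0) (b := 1) (g z) hr0.ne'
      calc φ (1/2 + (r:ℂ)*(z-1/2))
          = ∫ t in (0:ℝ)..1, ((r:ℂ)*(z - 1/2)) * g z (r*t) :=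
            intervalIntegral.integral_congr key
        _ = ((r:ℂ)*(z - 1/2)) * ∫ t in (0:ℝ)..1, g z (r*t) :=
            intervalIntegral.integral_const_mul _ _
        _ = ((r:ℂ)*(z - 1/2)) * (((r:ℝ):ℂ)⁻¹ * ∫ t in (0:ℝ)..r, g z t) := by
            rw [hcm]; simp [Complex.real_smul]
        _ = (z - 1/2) * ∫ t in (0:ℝ)..r, g z t := by
            have hrne : ((r:ℝ):ℂ) ≠ 0 := Complex.ofReal_ne_zero.mpr hr0.ne'
            field_simp
    have hsplit : φ z - φ (1/2 + (r:ℂ)*(z-1/2)) = (z - 1/2) * ∫ t in r..1, g z t := by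
      rw [φ_eq z, hzr, ← mul_sub]
      congr 1
      rw [← intervalIntegral.integral_add_adjacent_intervals hint1 hint2]
      ring
    rw [hsplit, norm_mul]
    have hb : ‖∫ t in r..1, g z t‖ ≤ K * (1 - r) := by
      have hne : ∀ᵐ t : ℝ ∂(volume : Measure ℝ), t ≠ 1 := by simp [ae_iff, not_not]
      have hae : ∀ᵐ t ∂(volume : Measure ℝ).restrict (Set.uIoc r 1), ‖g z t‖ ≤ K := by
        refine ((ae_restrict_mem measurableSet_uIoc).and (ae_restrict_of_ae hne)).mono ?_
        rintro t ⟨htm, htne⟩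
        rw [uIoc_of_le hr1.le] at htm
        have ht1 : t < 1 := lt_of_le_of_ne htm.2 htne
        exact hK _ (hmem z h0 h1 t (hr0.le.trans htm.1.le) ht1)
      have := intervalIntegral.norm_integral_le_of_norm_le hr1.le
        ((ae_restrict_iff' measurableSet_Ioc).mp (by rwa [uIoc_of_le hr1.le] at hae))
        (_root_.intervalIntegrable_const (c := K))
      rw [intervalIntegral.integral_const, smul_eq_mul] at this
      calc ‖∫ t in r..1, g z t‖ ≤ |(1 - r) * K| := this.trans (le_abs_self _)
        _ = (1 - r) * K := abs_of_nonneg (by nlinarith)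
        _ = K * (1 - r) := mul_comm _ _
    calc ‖z - 1/2‖ * ‖∫ t in r..1, g z t‖ ≤ ‖z - 1/2‖ * (K * (1-r)) :=
          mul_le_mul_of_nonneg_left hb (norm_nonneg _)
      _ = (1 - r) * (‖z - 1/2‖ * K) := by ring
  -- Lipschitz on the closed strip
  have lip : ∀ z1 z2 : ℂ, 0 ≤ z1.re → z1.re ≤ 1 → 0 ≤ z2.re → z2.re ≤ 1 →
      ‖φ z1 - φ z2‖ ≤ ‖z1 - z2‖ * K := by
    intro z1 z2 ha1 hb1 ha2 hb2
    refine le_of_forall_pos_le_add fun η hη => ?_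
    set C : ℝ := ‖z1 - 1/2‖ * K + ‖z2 - 1/2‖ * K with hCdef
    have hC0 : 0 ≤ C := by positivity
    have hCpos : (0:ℝ) < C + 1 := by linarith
    set r : ℝ := max (1/2) (1 - η / (C + 1)) with hrdef
    have hr0 : 0 < r := lt_of_lt_of_le (by norm_num) (le_max_left _ _)
    have hr1 : r < 1 := by
      apply max_lt (by norm_num)
      have : 0 < η / (C+1) := div_pos hη hCpos
      linarith
    have hrC : (1 - r) * C ≤ η := by
      have h1r : 1 - r ≤ η / (C+1) := by
        have := le_max_right (1/2) (1 - η/(C+1)); linarith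
      calc (1-r)*C ≤ (η/(C+1))*C := mul_le_mul_of_nonneg_right h1r hC0
        _ ≤ η := by
            rw [div_mul_eq_mul_div, div_le_iff₀ hCpos]; nlinarith
    set w1 : ℂ := 1/2 + (r:ℂ)*(z1 - 1/2) with hw1def
    set w2 : ℂ := 1/2 + (r:ℂ)*(z2 - 1/2) with hw2def
    have hw1S : w1 ∈ S := hmem z1 ha1 hb1 r hr0.le hr1
    have hw2S : w2 ∈ S := hmem z2 ha2 hb2 r hr0.le hr1
    have hmid : ‖φ w1 - φ w2‖ ≤ K * ‖w1 - w2‖ :=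
      lipOn S hconv subset_rfl K hK w1 hw1S w2 hw2S
    have hww : ‖w1 - w2‖ ≤ ‖z1 - z2‖ := by
      have e12 : w1 - w2 = (r:ℂ)*(z1 - z2) := by rw [hw1def, hw2def]; ring
      rw [e12, norm_mul]
      have : ‖((r:ℝ):ℂ)‖ = r := by
        rw [Complex.norm_real, Real.norm_eq_abs, abs_of_pos hr0]
      rw [this]
      exact mul_le_of_le_one_left (norm_nonneg _) hr1.le
    have h1 := rad z1 ha1 hb1 r hr0 hr1
    have h2 := rad z2 ha2 hb2 r hr0 hr1
    have h2' : ‖φ w2 - φ z2‖ ≤ (1 - r) * (‖z2 - 1/2‖ * K) := by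
      rw [norm_sub_rev]; exact h2
    have htri : ‖φ z1 - φ z2‖ ≤ ‖φ z1 - φ w1‖ + ‖φ w1 - φ w2‖ + ‖φ w2 - φ z2‖ := by
      have := dist_triangle4 (φ z1) (φ w1) (φ w2) (φ z2)
      simpa [dist_eq_norm] using this
    have hmid' : K * ‖w1 - w2‖ ≤ K * ‖z1 - z2‖ := mul_le_mul_of_nonneg_left hww hK0
    have : ‖φ z1 - φ z2‖ ≤ K * ‖z1 - z2‖ + (1-r)*C := by
      rw [hCdef]; nlinarith
    calc ‖φ z1 - φ z2‖ ≤ K * ‖z1 - z2‖ + (1-r)*C := this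
      _ ≤ ‖z1 - z2‖ * K + η := by rw [mul_comm]; linarith
  -- boundary estimate
  have side : ∀ (j : ℝ), (j = 0 ∨ j = 1) → ∀ t1 t2 : ℝ, ∀ M r : ℝ, 0 < r →
      (∀ z : ℂ, 0 < z.re → z.re < 1 → |z.re - j| < r → ‖h z‖ ≤ M) →
      ‖φ (j + t1*I) - φ (j + t2*I)‖ ≤ |t1 - t2| * M := by
    intro j hj t1 t2 M r hr hM
    have hj0 : 0 ≤ j := by rcases hj with rfl | rfl <;> norm_num
    have hj1 : j ≤ 1 := by rcases hj with rfl | rfl <;> norm_num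
    refine le_of_forall_pos_le_add fun η hη => ?_
    set ε : ℝ := min (r/2) (min (1/2) (η/(2*K+1))) with hεdef
    have h2K : (0:ℝ) < 2*K+1 := by linarith
    have hε0 : 0 < ε := lt_min (by linarith) (lt_min (by norm_num) (by positivity))
    have hεhalf : ε ≤ 1/2 := le_trans (min_le_right _ _) (min_le_left _ _)
    have hε1 : ε < 1 := by linarith
    have hεr : ε < r := lt_of_le_of_lt (min_le_left _ _) (by linarith)
    have hεη : 2 * (ε * K) ≤ η := by
      have hεle : ε ≤ η/(2*K+1) := le_trans (min_le_right _ _) (min_le_right _ _)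
      have := (le_div_iff₀ h2K).mp hεle
      nlinarith
    obtain ⟨x, hx0, hx1, hxj, hjx⟩ :
        ∃ x : ℝ, 0 < x ∧ x < 1 ∧ |x - j| < r ∧ |j - x| = ε := by
      rcases hj with rfl | rfl
      · exact ⟨ε, hε0, hε1,
          by rw [sub_zero, abs_of_pos hε0]; exact hεr,
          by rw [zero_sub, abs_neg, abs_of_pos hε0]⟩
      · refine ⟨1 - ε, by linarith, by linarith, ?_, ?_⟩
        · rw [show (1-ε) - 1 = -ε by ring, abs_neg, abs_of_pos hε0]; exact hεr
        · rw [show 1 - (1-ε) = ε by ring, abs_of_pos hε0]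
    set sl : Set ℂ := {z : ℂ | z.re = x} with hsldef
    have hconvl : Convex ℝ sl := by
      have : sl = Complex.reLm ⁻¹' {x} := rfl
      rw [this]; exact (convex_singleton x).linear_preimage _
    have hlsub : sl ⊆ S := fun z hz =>
      ⟨lt_of_lt_of_eq hx0 hz.symm, lt_of_eq_of_lt hz hx1⟩
    have hMl : ∀ w ∈ sl, ‖h w‖ ≤ M := by
      intro w hw
      have hwS := hlsub hw
      refine hM w hwS.1 hwS.2 ?_
      rw [show w.re = x from hw]; exact hxj
    have hm1 : ((x:ℝ):ℂ) + t1*I ∈ sl := by simp [hsldef]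
    have hm2 : ((x:ℝ):ℂ) + t2*I ∈ sl := by simp [hsldef]
    have hmid := lipOn sl hconvl hlsub M hMl _ hm1 _ hm2
    have hdiffnorm : ‖(((x:ℝ):ℂ) + t1*I) - (((x:ℝ):ℂ) + t2*I)‖ = |t1 - t2| := by
      rw [show (((x:ℝ):ℂ) + t1*I) - (((x:ℝ):ℂ) + t2*I) = ((t1 - t2 : ℝ):ℂ)*I from by
        push_cast; ring]
      rw [norm_mul, Complex.norm_real, Complex.norm_I, Real.norm_eq_abs, mul_one]
    have hedgenorm : ∀ t : ℝ, ‖((j:ℂ) + t*I) - (((x:ℝ):ℂ) + t*I)‖ = ε := by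
      intro t
      rw [show ((j:ℂ) + t*I) - (((x:ℝ):ℂ) + t*I) = ((j - x : ℝ):ℂ) from by push_cast; ring]
      rw [Complex.norm_real, Real.norm_eq_abs, hjx]
    have hre1 : ∀ t : ℝ, ((j:ℂ) + t*I).re = j := by intro t; simp
    have hre2 : ∀ t : ℝ, (((x:ℝ):ℂ) + t*I).re = x := by intro t; simp
    have hedge1 : ‖φ ((j:ℂ) + t1*I) - φ (((x:ℝ):ℂ) + t1*I)‖ ≤ ε * K := by
      have := lip ((j:ℂ) + t1*I) (((x:ℝ):ℂ) + t1*I)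
        (by rw [hre1]; exact hj0) (by rw [hre1]; exact hj1)
        (by rw [hre2]; exact hx0.le) (by rw [hre2]; exact hx1.le)
      rwa [hedgenorm] at this
    have hedge2 : ‖φ (((x:ℝ):ℂ) + t2*I) - φ ((j:ℂ) + t2*I)‖ ≤ ε * K := by
      have := lip ((j:ℂ) + t2*I) (((x:ℝ):ℂ) + t2*I)
        (by rw [hre1]; exact hj0) (by rw [hre1]; exact hj1)
        (by rw [hre2]; exact hx0.le) (by rw [hre2]; exact hx1.le)
      rw [hedgenorm] at this
      rwa [norm_sub_rev]
    have htri : ‖φ ((j:ℂ) + t1*I) - φ ((j:ℂ) + t2*I)‖ ≤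
        ‖φ ((j:ℂ) + t1*I) - φ (((x:ℝ):ℂ) + t1*I)‖ +
        ‖φ (((x:ℝ):ℂ) + t1*I) - φ (((x:ℝ):ℂ) + t2*I)‖ +
        ‖φ (((x:ℝ):ℂ) + t2*I) - φ ((j:ℂ) + t2*I)‖ := by
      have := dist_triangle4 (φ ((j:ℂ) + t1*I)) (φ (((x:ℝ):ℂ) + t1*I))
        (φ (((x:ℝ):ℂ) + t2*I)) (φ ((j:ℂ) + t2*I))
      simpa [dist_eq_norm] using this
    rw [hdiffnorm] at hmid
    have : M * |t1 - t2| = |t1 - t2| * M := mul_comm _ _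
    linarith
  refine ⟨φ, lip, fun z hz0 hz1 => hderiv z ⟨hz0, hz1⟩, ?_, ?_, ?_⟩
  · -- left boundary
    intro t1 t2
    set A := {M | ∃ r > (0:ℝ), ∀ z : ℂ, 0 < z.re → z.re < 1 → |z.re - 0| < r → ‖h z‖ ≤ M}
      with hAdef
    have hAne : A.Nonempty :=
      ⟨max B 0, 1, one_pos, fun z h0 h1 _ => le_trans (hB z h0 h1) (le_max_left _ _)⟩
    have hall : ∀ M ∈ A, ‖φ ((t1:ℂ) * I) - φ ((t2:ℂ) * I)‖ ≤ |t1 - t2| * M := by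
      rintro M ⟨r, hr, hM⟩
      simpa using side 0 (Or.inl rfl) t1 t2 M r hr (by simpa using hM)
    rcases eq_or_ne t1 t2 with rfl | hne
    · simp
    · have hpos : 0 < |t1 - t2| := abs_pos.mpr (sub_ne_zero.mpr hne)
      have hle : ‖φ ((t1:ℂ)*I) - φ ((t2:ℂ)*I)‖ / |t1-t2| ≤ sInf A :=
        le_csInf hAne fun M hM => (div_le_iff₀ hpos).mpr
          ((hall M hM).trans_eq (mul_comm _ _))
      calc ‖φ ((t1:ℂ)*I) - φ ((t2:ℂ)*I)‖
          = ‖φ ((t1:ℂ)*I) - φ ((t2:ℂ)*I)‖/|t1-t2| * |t1-t2| := (div_mul_cancel₀ _ hpos.ne').symm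
        _ ≤ sInf A * |t1-t2| := mul_le_mul_of_nonneg_right hle hpos.le
        _ = |t1-t2| * sInf A := mul_comm _ _
  · -- right boundary
    intro t1 t2
    set A := {M | ∃ r > (0:ℝ), ∀ z : ℂ, 0 < z.re → z.re < 1 → |z.re - 1| < r → ‖h z‖ ≤ M}
      with hAdef
    have hAne : A.Nonempty :=
      ⟨max B 0, 1, one_pos, fun z h0 h1 _ => le_trans (hB z h0 h1) (le_max_left _ _)⟩
    have hall : ∀ M ∈ A, ‖φ (1 + (t1:ℂ) * I) - φ (1 + (t2:ℂ) * I)‖ ≤ |t1 - t2| * M := by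
      rintro M ⟨r, hr, hM⟩
      have := side 1 (Or.inr rfl) t1 t2 M r hr (by simpa using hM)
      simpa using this
    rcases eq_or_ne t1 t2 with rfl | hne
    · simp
    · have hpos : 0 < |t1 - t2| := abs_pos.mpr (sub_ne_zero.mpr hne)
      have hle : ‖φ (1 + (t1:ℂ)*I) - φ (1 + (t2:ℂ)*I)‖ / |t1-t2| ≤ sInf A :=
        le_csInf hAne fun M hM => (div_le_iff₀ hpos).mpr
          ((hall M hM).trans_eq (mul_comm _ _))
      calc ‖φ (1 + (t1:ℂ)*I) - φ (1 + (t2:ℂ)*I)‖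
          = ‖φ (1 + (t1:ℂ)*I) - φ (1 + (t2:ℂ)*I)‖/|t1-t2| * |t1-t2| := (div_mul_cancel₀ _ hpos.ne').symm
        _ ≤ sInf A * |t1-t2| := mul_le_mul_of_nonneg_right hle hpos.le
        _ = |t1-t2| * sInf A := mul_comm _ _
  · -- pointwise bound
    intro z h0 h1
    have := lip z (1/2) h0 h1 (by norm_num) (by norm_num)
    rw [φ_half, sub_zero] at this
    exact this
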